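/- Let k be a field of characteristic zero and (R,Δ) a commutative differential k-algebra with R a finitely generated (affine) k-algebra. If P is a Δ-primitive ideal of R, then P is Δ-rational: the Δ-center Z_Δ(Fract(R/P)) of the quotient field of R/P is algebraic over k. -/

import Mathlib

section Defs

variable {k R : Type*} [CommRing k] [CommRing R] [Algebra k R]

/-- An ideal stable under all derivations in `Δ`. -/
def IsDeltaIdeal (Δ : Set (Derivation k R R)) (I : Ideal R) : Prop :=
  ∀ δ ∈ Δ, ∀ x ∈ I, δ x ∈ I

/-- The `Δ`-core of an ideal `J`: the largest `Δ`-stable ideal contained in `J`. -/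
def deltaCore (Δ : Set (Derivation k R R)) (J : Ideal R) : Ideal R :=
  sSup {I : Ideal R | IsDeltaIdeal Δ I ∧ I ≤ J}

/-- A `Δ`-prime ideal: a proper `Δ`-ideal `Q` such that whenever a product of two
`Δ`-ideals lies in `Q`, one of them lies in `Q`. -/
def IsDeltaPrime (Δ : Set (Derivation k R R)) (Q : Ideal R) : Prop :=
  Q ≠ ⊤ ∧ IsDeltaIdeal Δ Q ∧
    ∀ I J : Ideal R, IsDeltaIdeal Δ I → IsDeltaIdeal Δ J → I * J ≤ Q → I ≤ Q ∨ J ≤ Q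

/-- A `Δ`-primitive ideal: the `Δ`-core of a maximal ideal. -/
def IsDeltaPrimitive (Δ : Set (Derivation k R R)) (P : Ideal R) : Prop :=
  ∃ M : Ideal R, M.IsMaximal ∧ deltaCore Δ M = P

end Defs

section Aux

variable {k R : Type*} [CommRing k] [CommRing R] [Algebra k R]

variable (Δ : Set (Derivation k R R)) (M : Ideal R)

lemma deltaCore_le' : deltaCore Δ M ≤ M := sSup_le fun _ hI => hI.2

lemma le_deltaCore' {I : Ideal R} (h1 : IsDeltaIdeal Δ I) (h2 : I ≤ M) : I ≤ deltaCore Δ M :=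
  le_sSup ⟨h1, h2⟩

lemma mem_deltaCore' {x : R} :
    x ∈ deltaCore Δ M ↔ ∃ I, (IsDeltaIdeal Δ I ∧ I ≤ M) ∧ x ∈ I := by
  have hne : {I : Ideal R | IsDeltaIdeal Δ I ∧ I ≤ M}.Nonempty :=
    ⟨⊥, fun δ _ x hx => by simp_all, bot_le⟩
  have hdir : DirectedOn (· ≤ ·) {I : Ideal R | IsDeltaIdeal Δ I ∧ I ≤ M} := by
    rintro I ⟨hI, hIM⟩ J ⟨hJ, hJM⟩
    refine ⟨I ⊔ J, ⟨?_, sup_le hIM hJM⟩, le_sup_left, le_sup_right⟩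
    intro δ hδ x hx
    rcases Submodule.mem_sup.1 hx with ⟨i, hi, j, hj, rfl⟩
    rw [map_add]
    exact Submodule.add_mem_sup (hI δ hδ i hi) (hJ δ hδ j hj)
  exact Submodule.mem_sSup_of_directed hne hdir

lemma isDeltaIdeal_deltaCore' : IsDeltaIdeal Δ (deltaCore Δ M) := by
  intro δ hδ x hx
  rcases (mem_deltaCore' Δ M).1 hx with ⟨I, hI, hxI⟩
  exact le_deltaCore' Δ M hI.1 hI.2 (hI.1 δ hδ x hxI)

end Aux

lemma natCast_cancel' (k : Type*) {R : Type*} [Field k] [CharZero k] [CommRing R] [Algebra k R]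
    {n : ℕ} (hn : n ≠ 0) {I : Ideal R} {w : R} (h : (n : R) * w ∈ I) : w ∈ I := by
  have h1 : (algebraMap k R ((n : k)⁻¹)) * ((n : R) * w) ∈ I := Ideal.mul_mem_left _ _ h
  have h2 : (algebraMap k R ((n : k)⁻¹)) * (n : R) = 1 := by
    rw [show ((n : R)) = algebraMap k R (n : k) by push_cast; simp, ← map_mul,
      inv_mul_cancel₀ (by exact_mod_cast hn), map_one]
  rwa [← mul_assoc, h2, one_mul] at h1

lemma cast_mul_pow_pred' {R : Type*} [CommRing R] (a c : R) (i : ℕ) :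
    (i : R) * (a ^ (i - 1) * a * c) = (i : R) * (a ^ i * c) := by
  cases i with
  | zero => simp
  | succ n => rw [Nat.succ_sub_one, ← pow_succ]

lemma isDeltaIdeal_radical' {k R : Type*} [Field k] [CharZero k] [CommRing R] [Algebra k R]
    {Δ : Set (Derivation k R R)} {I : Ideal R}
    (hI : IsDeltaIdeal Δ I) : IsDeltaIdeal Δ I.radical := by
  intro δ hδ x hx
  rcases Ideal.mem_radical_iff.mp hx with ⟨n, hxn⟩
  set y := δ x with hy
  suffices h : ∀ j, j ≤ n → x ^ (n - j) * y ^ (2 * j) ∈ I by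
    have := h n le_rfl
    simp only [Nat.sub_self, pow_zero, one_mul] at this
    exact Ideal.mem_radical_iff.mpr ⟨2 * n, this⟩
  intro j
  induction j with
  | zero => intro _; simpa using hxn
  | succ j ih =>
    intro hj
    have hv : x ^ (n - j) * y ^ (2 * j) ∈ I := ih (le_of_lt hj)
    obtain ⟨m, hm⟩ : ∃ m, n - j = m + 1 := ⟨n - j - 1, by omega⟩
    rw [hm] at hv
    have ht : δ (x ^ (m+1) * y ^ (2*j)) ∈ I := hI δ hδ _ hv
    have hls : δ (x ^ (m+1) * y ^ (2*j)) * y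
        = (x^(m+1) * (((2*j : ℕ):R) * (y^(2*j-1) * δ y)) + y^(2*j) * (((m+1 : ℕ):R) * (x^m * y))) * y := by
      rw [Derivation.leibniz, Derivation.leibniz_pow, Derivation.leibniz_pow]
      simp only [smul_eq_mul, nsmul_eq_mul, Nat.add_sub_cancel]
      rfl
    have key : ((m+1 : ℕ) : R) * (x ^ m * y ^ (2*(j+1)))
        = δ (x ^ (m+1) * y ^ (2*j)) * y - ((2*j : ℕ) : R) * ((x^(m+1) * y^(2*j)) * δ y) := by
      rw [hls]
      rw [show (x^(m+1) * (((2*j:ℕ):R) * (y^(2*j-1) * δ y)) + y^(2*j) * (((m+1:ℕ):R) * (x^m * y))) * y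
          = ((2*j:ℕ):R) * (y^(2*j-1) * y * (x^(m+1) * δ y)) + ((m+1:ℕ):R) * (x^m * (y^(2*j) * y * y)) by ring]
      rw [cast_mul_pow_pred' (R := R) y (x^(m+1) * δ y) (2*j)]
      have hyy : y ^ (2*j) * y * y = y ^ (2*(j+1)) := by
        rw [show 2*(j+1) = 2*j + 1 + 1 by ring, pow_succ, pow_succ]
      rw [hyy]
      ring
    have hmem : ((m+1 : ℕ) : R) * (x ^ m * y ^ (2*(j+1))) ∈ I := by
      rw [key]
      exact Ideal.sub_mem _ (Ideal.mul_mem_right _ _ ht)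
        (Ideal.mul_mem_left _ _ (Ideal.mul_mem_right _ _ hv))
    have hfin : x ^ m * y ^ (2*(j+1)) ∈ I := natCast_cancel' k (Nat.succ_ne_zero m) hmem
    have hm' : n - (j+1) = m := by omega
    rwa [hm']

theorem deltaCore_isPrime' {k R : Type*} [Field k] [CharZero k] [CommRing R] [Algebra k R]
    {Δ : Set (Derivation k R R)} {M : Ideal R} (hM : M.IsMaximal) :
    (deltaCore Δ M).IsPrime := by
  set P := deltaCore Δ M with hPdef
  have hPM : P ≤ M := deltaCore_le' Δ M
  have hPΔ : IsDeltaIdeal Δ P := isDeltaIdeal_deltaCore' Δ M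
  have hrad : P.radical ≤ P := by
    refine le_deltaCore' Δ M (isDeltaIdeal_radical' hPΔ) ?_
    calc P.radical ≤ M.radical := Ideal.radical_mono hPM
    _ = M := hM.isPrime.radical
  constructor
  · exact fun h => hM.ne_top (top_le_iff.mp (h ▸ hPM))
  · intro a b hab
    by_contra hcon
    push_neg at hcon
    obtain ⟨ha, hb⟩ := hcon
    have star : ∀ r s : R, r * s ∈ P → ∀ δ ∈ Δ, δ r * s ∈ P := by
      intro r s hrs δ hδ
      have h1 : r • δ s + s • δ r ∈ P := Derivation.leibniz δ r s ▸ hPΔ δ hδ _ hrs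
      have h2 : (δ r * s) * (δ r * s) ∈ P := by
        have e : (δ r * s) * (δ r * s)
            = (δ r * s) * (r • δ s + s • δ r) - (r * s) * (δ r * δ s) := by
          simp only [smul_eq_mul]; ring
        rw [e]
        exact Ideal.sub_mem _ (Ideal.mul_mem_left _ _ h1) (Ideal.mul_mem_right _ _ hrs)
      have : δ r * s ∈ P.radical := Ideal.mem_radical_iff.mpr ⟨2, by rwa [pow_two]⟩
      exact hrad this
    let T : Ideal R :=
      { carrier := {r | r * b ∈ P}
        add_mem' := fun {u v} hu hv => by simpa [add_mul] using Ideal.add_mem P hu hv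
        zero_mem' := by simp
        smul_mem' := fun c u hu => by
          simpa [smul_eq_mul, mul_assoc] using Ideal.mul_mem_left _ c hu }
    have hTΔ : IsDeltaIdeal Δ T := fun δ hδ r hr => star r b hr δ hδ
    let U : Ideal R :=
      { carrier := {s | ∀ t ∈ T, t * s ∈ P}
        add_mem' := fun {u v} hu hv t ht => by
          simpa [mul_add] using Ideal.add_mem P (hu t ht) (hv t ht)
        zero_mem' := fun t ht => by simp
        smul_mem' := fun c u hu t ht => by
          have := Ideal.mul_mem_left _ c (hu t ht)
          simpa [smul_eq_mul, show c * (t * u) = t * (c * u) by ring] using this }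
    have hUΔ : IsDeltaIdeal Δ U := by
      intro δ hδ s hs t ht
      have h1 : t * s ∈ P := hs t ht
      have h2 : t • δ s + s • δ t ∈ P := Derivation.leibniz δ t s ▸ hPΔ δ hδ _ h1
      have h3 : δ t * s ∈ P := hs (δ t) (hTΔ δ hδ t ht)
      have heq : t * δ s = (t • δ s + s • δ t) - δ t * s := by simp only [smul_eq_mul]; ring
      rw [heq]
      exact Ideal.sub_mem _ h2 h3
    have haT : a ∈ T := hab
    have hbU : b ∈ U := fun t ht => ht
    have hTU : T ≤ M ∨ U ≤ M := by
      by_contra hc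
      push_neg at hc
      obtain ⟨h1, h2⟩ := hc
      obtain ⟨t, htT, htM⟩ := SetLike.not_le_iff_exists.mp h1
      obtain ⟨u, huU, huM⟩ := SetLike.not_le_iff_exists.mp h2
      have : t * u ∈ M := hPM (huU t htT)
      rcases hM.isPrime.mem_or_mem this with h | h
      exacts [htM h, huM h]
    rcases hTU with h | h
    · exact ha (le_deltaCore' Δ M hTΔ h haT)
    · exact hb (le_deltaCore' Δ M hUΔ h hbU)

open TrivSqZeroExt in
lemma exists_derivation_fractionRing' {k A : Type*} [CommRing k] [CommRing A] [IsDomain A]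
    [Algebra k A] (d : Derivation k A A) :
    ∃ D : Derivation k (FractionRing A) (FractionRing A),
      ∀ a : A, D (algebraMap A (FractionRing A) a) = algebraMap A (FractionRing A) (d a) := by
  classical
  set K := FractionRing A with hK
  set ι := algebraMap A K with hι
  have hinj : Function.Injective ι := IsFractionRing.injective A K
  let φ : A →+* TrivSqZeroExt K K :=
    { toFun := fun a => ⟨ι a, ι (d a)⟩
      map_one' := by ext <;> simp
      map_mul' := fun a b => by
        ext
        · show ι (a * b) = ι a * ι b
          exact map_mul ι a b
        · show ι (d (a * b)) = ι a • ι (d b) + MulOpposite.op (ι b) • ι (d a)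
          simp only [snd_mul, fst_mk, snd_mk, smul_eq_mul, op_smul_eq_smul, map_mul,
            Derivation.leibniz, map_add, smul_eq_mul]
          try ring
      map_zero' := by ext <;> simp
      map_add' := fun a b => by ext <;> simp <;> rfl }
  have hunit : ∀ s : nonZeroDivisors A, IsUnit (φ s) := by
    intro s
    rw [isUnit_iff_isUnit_fst]
    have : ι s ≠ 0 := fun h => nonZeroDivisors.ne_zero s.2 (hinj (by simpa using h))
    exact isUnit_iff_ne_zero.mpr this
  let ψ : K →+* TrivSqZeroExt K K := IsLocalization.lift (M := nonZeroDivisors A) hunit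
  have hψι : ∀ a : A, ψ (ι a) = φ a := fun a => IsLocalization.lift_eq hunit a
  have hfst : ∀ x : K, (ψ x).fst = x := by
    have : (TrivSqZeroExt.fstHom K K K).toRingHom.comp ψ = RingHom.id K := by
      apply IsLocalization.ringHom_ext (nonZeroDivisors A)
      ext a
      simp [hψι a, φ]
      rw [← hι, hψι a]
      rfl
    intro x
    exact congrArg (fun f => f x) (congrArg (fun g => g.toFun) this)
  have hψsmul : ∀ (c : k) (x : K), (ψ (c • x)).snd = c • (ψ x).snd := by
    intro c x
    have h1 : c • x = algebraMap k K c * x := by rw [Algebra.smul_def]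
    have h2 : algebraMap k K c = ι (algebraMap k A c) := by
      rw [IsScalarTower.algebraMap_apply k A K]
    have h3 : ψ (algebraMap k K c) = ⟨algebraMap k K c, 0⟩ := by
      rw [h2, hψι]
      show (⟨ι (algebraMap k A c), ι (d (algebraMap k A c))⟩ : TrivSqZeroExt K K) = _
      rw [Derivation.map_algebraMap, map_zero, ← h2]
    rw [h1, ψ.map_mul, h3]
    show algebraMap k K c • (ψ x).snd + MulOpposite.op (ψ x).fst • (0 : K) = c • (ψ x).snd
    simp [Algebra.smul_def]
  refine ⟨{ toFun := fun x => (ψ x).snd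
            map_add' := fun x y => by
              show (ψ (x + y)).snd = (ψ x).snd + (ψ y).snd
              rw [ψ.map_add, snd_add]
            map_smul' := fun c x => by
              show (ψ (c • x)).snd = c • (ψ x).snd
              exact hψsmul c x
            map_one_eq_zero' := by simp
            leibniz' := fun x y => by
              show (ψ (x * y)).snd = x • (ψ y).snd + y • (ψ x).snd
              rw [ψ.map_mul, snd_mul, hfst, hfst, op_smul_eq_smul] }, ?_⟩
  intro a
  show (ψ (ι a)).snd = ι (d a)
  rw [hψι]
  rfl

lemma derivation_aeval_eq_zero' {k S : Type*} [CommRing k] [CommRing S] [Algebra k S]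
    (D : Derivation k S S) {z : S} (hz : D z = 0) (p : Polynomial k) :
    D (Polynomial.aeval z p) = 0 := by
  induction p using Polynomial.induction_on' with
  | add p q hp hq => rw [map_add, map_add, hp, hq, add_zero]
  | monomial n c =>
    rw [Polynomial.aeval_monomial, Derivation.leibniz, Derivation.map_algebraMap,
      Derivation.leibniz_pow, hz]
    simp

lemma eval_clear' {k S : Type*} [CommRing k] [CommRing S] [Algebra k S]
    (p : Polynomial k) (z w u : S) (h : u = z * w) :
    ∑ i ∈ Finset.range (p.natDegree + 1),
        algebraMap k S (p.coeff i) * (u ^ i * w ^ (p.natDegree - i))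
      = Polynomial.aeval z p * w ^ p.natDegree := by
  rw [Polynomial.aeval_eq_sum_range, Finset.sum_mul]
  refine Finset.sum_congr rfl fun i hi => ?_
  have hile : i ≤ p.natDegree := Nat.lt_succ_iff.mp (Finset.mem_range.mp hi)
  have hw : w ^ i * w ^ (p.natDegree - i) = w ^ p.natDegree := by
    rw [← pow_add]
    congr 1
    omega
  rw [Algebra.smul_def, h, mul_pow]
  calc algebraMap k S (p.coeff i) * (z ^ i * w ^ i * w ^ (p.natDegree - i))
      = algebraMap k S (p.coeff i) * z ^ i * (w ^ i * w ^ (p.natDegree - i)) := by ring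
    _ = algebraMap k S (p.coeff i) * z ^ i * w ^ p.natDegree := by rw [hw]


/-- Main auxiliary lemma, downstairs: if `A` is an affine domain over `k` (char 0) with a
maximal ideal `Mb` whose "core" with respect to a set `S` of derivations is zero, then any
element of `Fract A` killed by (extensions of) all derivations in `S` is algebraic over `k`. -/
lemma deltaRational_aux {k A : Type*} [Field k] [CharZero k] [CommRing A] [IsDomain A]
    [Algebra k A] [Algebra.FiniteType k A]
    (Mb : Ideal A) (hMbmax : Mb.IsMaximal)
    (S : Set (Derivation k A A))
    (core0 : ∀ I : Ideal A, (∀ d ∈ S, ∀ y ∈ I, d y ∈ I) → I ≤ Mb → I = ⊥)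
    (x : FractionRing A)
    (hDx : ∀ d ∈ S, ∃ D : Derivation k (FractionRing A) (FractionRing A),
        (∀ y : A, D (algebraMap A (FractionRing A) y) = algebraMap A (FractionRing A) (d y)) ∧
        D x = 0) :
    IsAlgebraic k x := by
  classical
  by_contra hxalg
  have hinj : Function.Injective (algebraMap A (FractionRing A)) :=
    IsFractionRing.injective A (FractionRing A)
  have hxalg' : ∀ p : Polynomial k, p ≠ 0 → Polynomial.aeval x p ≠ 0 := by
    intro p hp hc
    exact hxalg ⟨p, hp, hc⟩
  -- the conductor ideal of x: we can choose a denominator outside Mb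
  let Cond : Ideal A :=
    { carrier := {b | ∃ a, x * algebraMap A (FractionRing A) b = algebraMap A (FractionRing A) a}
      add_mem' := by
        rintro u v ⟨au, hu⟩ ⟨av, hv⟩
        exact ⟨au + av, by rw [map_add, map_add, mul_add, hu, hv]⟩
      zero_mem' := ⟨0, by simp⟩
      smul_mem' := by
        rintro c u ⟨a, ha⟩
        refine ⟨c * a, ?_⟩
        rw [smul_eq_mul, map_mul, map_mul,
          show x * (algebraMap A (FractionRing A) c * algebraMap A (FractionRing A) u)
            = algebraMap A (FractionRing A) c * (x * algebraMap A (FractionRing A) u) by ring, ha]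
          }
  have hCondStab : ∀ d ∈ S, ∀ b ∈ Cond, d b ∈ Cond := by
    intro d hd b hb
    obtain ⟨a, ha⟩ := hb
    obtain ⟨D, hDι, hD0⟩ := hDx d hd
    refine ⟨d a, ?_⟩
    have hc := congrArg D ha
    rw [Derivation.leibniz, hDι, hDι, hD0] at hc
    simpa [smul_eq_mul] using hc
  obtain ⟨⟨a0, s0⟩, hs0⟩ := IsLocalization.surj (nonZeroDivisors A) x
  have hCondne : Cond ≠ ⊥ := by
    intro h
    have hs0mem : (s0 : A) ∈ Cond := ⟨a0, hs0⟩
    rw [h] at hs0mem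
    exact nonZeroDivisors.ne_zero s0.2 (by simpa using hs0mem)
  obtain ⟨b, hbC, hbM⟩ : ∃ b ∈ Cond, b ∉ Mb := by
    by_contra h
    push_neg at h
    exact hCondne (core0 Cond hCondStab h)
  obtain ⟨a, hab⟩ := hbC
  -- residue field and minimal polynomial
  letI : Field (A ⧸ Mb) := Ideal.Quotient.field Mb
  haveI hFT2 : Algebra.FiniteType k (A ⧸ Mb) :=
    Algebra.FiniteType.of_surjective (Ideal.Quotient.mkₐ k Mb)
      (Ideal.Quotient.mkₐ_surjective k Mb)
  haveI : Module.Finite k (A ⧸ Mb) := finite_of_finite_type_of_isJacobsonRing k (A ⧸ Mb)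
  have hπb : Ideal.Quotient.mk Mb b ≠ 0 := fun h => hbM (Ideal.Quotient.eq_zero_iff_mem.mp h)
  set zb := Ideal.Quotient.mk Mb a * (Ideal.Quotient.mk Mb b)⁻¹ with hzbdef
  have hzb : Ideal.Quotient.mk Mb a = zb * Ideal.Quotient.mk Mb b := by
    rw [hzbdef, mul_assoc, inv_mul_cancel₀ hπb, mul_one]
  have hint : IsIntegral k zb := IsIntegral.of_finite k zb
  have hp0 : minpoly k zb ≠ 0 := minpoly.ne_zero hint
  set p := minpoly k zb with hpdef
  set dn := p.natDegree with hdndef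
  set cp : A := ∑ i ∈ Finset.range (dn + 1),
    algebraMap k A (p.coeff i) * (a ^ i * b ^ (dn - i)) with hcpdef
  have hcpK : algebraMap A (FractionRing A) cp
      = Polynomial.aeval x p * (algebraMap A (FractionRing A) b) ^ dn := by
    rw [hcpdef, map_sum]
    refine Eq.trans (Finset.sum_congr rfl fun i hi => ?_)
      (eval_clear' p x (algebraMap A (FractionRing A) b) (algebraMap A (FractionRing A) a)
        hab.symm)
    rw [map_mul, map_mul, map_pow, map_pow,
      ← IsScalarTower.algebraMap_apply k A (FractionRing A)]
  have hcpL : Ideal.Quotient.mk Mb cp = 0 := by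
    have h2 : Ideal.Quotient.mk Mb cp
        = Polynomial.aeval zb p * (Ideal.Quotient.mk Mb b) ^ dn := by
      rw [hcpdef, map_sum]
      refine Eq.trans (Finset.sum_congr rfl fun i hi => ?_)
        (eval_clear' p zb (Ideal.Quotient.mk Mb b) (Ideal.Quotient.mk Mb a) hzb)
      rw [map_mul, map_mul, map_pow, map_pow, ← Ideal.Quotient.algebraMap_eq,
        ← IsScalarTower.algebraMap_apply k A (A ⧸ Mb)]
    rw [h2, hpdef, minpoly.aeval, zero_mul]
  have hιb : algebraMap A (FractionRing A) b ≠ 0 := by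
    intro h0
    have : b = 0 := hinj (by simpa using h0)
    exact hbM (this ▸ Ideal.zero_mem Mb)
  have hcpne : cp ≠ 0 := by
    intro h
    have h1 := hcpK
    rw [h, map_zero] at h1
    rcases mul_eq_zero.mp h1.symm with h2 | h2
    · exact hxalg' p hp0 h2
    · exact pow_ne_zero dn hιb h2
  -- the ideal E
  let E : Ideal A :=
    { carrier := {y | ∃ u : FractionRing A,
        algebraMap A (FractionRing A) y = Polynomial.aeval x p * u ∧
        ∃ c s, s ∉ Mb ∧ u * algebraMap A (FractionRing A) s = algebraMap A (FractionRing A) c}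
      zero_mem' := ⟨0, by simp, 0, 1, (Ideal.ne_top_iff_one Mb).mp hMbmax.ne_top, by simp⟩
      add_mem' := by
        rintro y1 y2 ⟨u1, e1, c1, s1, hs1, f1⟩ ⟨u2, e2, c2, s2, hs2, f2⟩
        refine ⟨u1 + u2, by rw [map_add, e1, e2, mul_add], c1 * s2 + c2 * s1, s1 * s2,
          fun h => ?_, ?_⟩
        · rcases hMbmax.isPrime.mem_or_mem h with h | h
          exacts [hs1 h, hs2 h]
        · rw [map_mul, map_add, map_mul, map_mul, add_mul,
            show u1 * (algebraMap A (FractionRing A) s1 * algebraMap A (FractionRing A) s2)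
              = (u1 * algebraMap A (FractionRing A) s1) * algebraMap A (FractionRing A) s2
              by ring, f1,
            show u2 * (algebraMap A (FractionRing A) s1 * algebraMap A (FractionRing A) s2)
              = (u2 * algebraMap A (FractionRing A) s2) * algebraMap A (FractionRing A) s1
              by ring, f2]
      smul_mem' := by
        rintro c y ⟨u, e, cc, s, hs, f⟩
        refine ⟨algebraMap A (FractionRing A) c * u, ?_, c * cc, s, hs, ?_⟩
        · rw [smul_eq_mul, map_mul, e]; ring
        · rw [map_mul,
            show algebraMap A (FractionRing A) c * u * algebraMap A (FractionRing A) s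
              = algebraMap A (FractionRing A) c * (u * algebraMap A (FractionRing A) s)
              by ring, f] }
  have hEStab : ∀ d ∈ S, ∀ y ∈ E, d y ∈ E := by
    intro d hd y hy
    obtain ⟨u, e, c, s, hs, f⟩ := hy
    obtain ⟨D, hDι, hD0⟩ := hDx d hd
    have hDp : D (Polynomial.aeval x p) = 0 := derivation_aeval_eq_zero' D hD0 p
    have e' : algebraMap A (FractionRing A) (d y) = Polynomial.aeval x p * D u := by
      have hc := congrArg D e
      rw [hDι, Derivation.leibniz, hDp] at hc
      simpa [smul_eq_mul] using hc
    have f' : D u * algebraMap A (FractionRing A) (s * s)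
        = algebraMap A (FractionRing A) (d c * s - c * d s) := by
      have hc := congrArg D f
      rw [Derivation.leibniz, hDι, hDι] at hc
      simp only [smul_eq_mul] at hc
      rw [map_mul, map_sub, map_mul, map_mul]
      calc D u * (algebraMap A (FractionRing A) s * algebraMap A (FractionRing A) s)
          = (u * algebraMap A (FractionRing A) (d s)
              + algebraMap A (FractionRing A) s * D u) * algebraMap A (FractionRing A) s
            - (u * algebraMap A (FractionRing A) s) * algebraMap A (FractionRing A) (d s) := by
            ring
        _ = algebraMap A (FractionRing A) (d c) * algebraMap A (FractionRing A) s
            - algebraMap A (FractionRing A) c * algebraMap A (FractionRing A) (d s) := by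
            rw [hc, f]
    exact ⟨D u, e', d c * s - c * d s, s * s,
      fun h => (hMbmax.isPrime.mem_or_mem h).elim hs hs, f'⟩
  have hcpE : cp ∈ E :=
    ⟨(algebraMap A (FractionRing A) b) ^ dn, hcpK, b ^ dn, 1,
      (Ideal.ne_top_iff_one Mb).mp hMbmax.ne_top, by rw [map_one, mul_one, map_pow]⟩
  have hEne : E ≠ ⊥ := by
    intro h
    rw [h] at hcpE
    exact hcpne (by simpa using hcpE)
  obtain ⟨x0, hx0E, hx0M⟩ : ∃ y ∈ E, y ∉ Mb := by
    by_contra h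
    push_neg at h
    exact hEne (core0 E hEStab h)
  obtain ⟨u, e0, c, s, hs, f0⟩ := hx0E
  have hfinal : x0 * (s * b ^ dn) = cp * c := by
    apply hinj
    rw [map_mul, map_mul, map_mul, map_pow, e0, hcpK,
      show Polynomial.aeval x p * u
            * (algebraMap A (FractionRing A) s * (algebraMap A (FractionRing A) b) ^ dn)
        = (Polynomial.aeval x p * (algebraMap A (FractionRing A) b) ^ dn)
            * (u * algebraMap A (FractionRing A) s) by ring, f0]
  have hfinalL := congrArg (Ideal.Quotient.mk Mb) hfinal
  rw [map_mul, map_mul, map_mul, map_pow, hcpL, zero_mul] at hfinalL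
  have h1 : Ideal.Quotient.mk Mb x0 ≠ 0 := fun h => hx0M (Ideal.Quotient.eq_zero_iff_mem.mp h)
  have h2 : Ideal.Quotient.mk Mb s ≠ 0 := fun h => hs (Ideal.Quotient.eq_zero_iff_mem.mp h)
  rcases mul_eq_zero.mp hfinalL with h | h
  · exact h1 h
  · rcases mul_eq_zero.mp h with h | h
    · exact h2 h
    · exact pow_ne_zero dn hπb h

/-- If `R` is an affine (finitely generated) `k`-algebra and `P` is a
`Δ`-primitive ideal of `R`, then `P` is `Δ`-rational: every element of the `Δ`-center of
`Fract(R/P)` (i.e. every element killed by all the derivations of `Fract(R/P)` induced by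
the derivations in `Δ`) is algebraic over `k`. -/
theorem deltaPrimitive_isDeltaRational
    {k R : Type*} [Field k] [CharZero k] [CommRing R] [Algebra k R]
    [Algebra.FiniteType k R]
    (Δ : Set (Derivation k R R)) (P : Ideal R) (hP : IsDeltaPrimitive Δ P) :
    ∀ x : FractionRing (R ⧸ P),
      (∀ D : Derivation k (FractionRing (R ⧸ P)) (FractionRing (R ⧸ P)),
        (∃ δ ∈ Δ, ∀ r : R,
          D (algebraMap (R ⧸ P) (FractionRing (R ⧸ P)) (Ideal.Quotient.mk P r)) =
            algebraMap (R ⧸ P) (FractionRing (R ⧸ P)) (Ideal.Quotient.mk P (δ r))) →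
        D x = 0) →
      IsAlgebraic k x := by
  classical
  intro x hx
  obtain ⟨M, hM, hPM⟩ := hP
  have hPle : P ≤ M := by rw [← hPM]; exact deltaCore_le' Δ M
  have hPΔ : IsDeltaIdeal Δ P := by rw [← hPM]; exact isDeltaIdeal_deltaCore' Δ M
  haveI hPprime : P.IsPrime := by rw [← hPM]; exact deltaCore_isPrime' hM
  haveI : IsDomain (R ⧸ P) := Ideal.Quotient.isDomain P
  haveI hFT1 : Algebra.FiniteType k (R ⧸ P) :=
    Algebra.FiniteType.of_surjective (Ideal.Quotient.mkₐ k P)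
      (Ideal.Quotient.mkₐ_surjective k P)
  -- descend and extend the derivations
  have key : ∀ δ ∈ Δ, ∃ (d : Derivation k (R ⧸ P) (R ⧸ P))
      (D : Derivation k (FractionRing (R ⧸ P)) (FractionRing (R ⧸ P))),
      (∀ r : R, d (Ideal.Quotient.mk P r) = Ideal.Quotient.mk P (δ r)) ∧
      (∀ y, D (algebraMap (R ⧸ P) (FractionRing (R ⧸ P)) y)
        = algebraMap (R ⧸ P) (FractionRing (R ⧸ P)) (d y)) ∧ D x = 0 := by
    intro δ hδ
    have hd0 : ∀ r : R, (Ideal.Quotient.mkₐ k P) r = 0 → (Ideal.Quotient.mkₐ k P) (δ r) = 0 := by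
      intro r hr
      rw [Ideal.Quotient.mkₐ_eq_mk] at hr ⊢
      exact Ideal.Quotient.eq_zero_iff_mem.mpr
        (hPΔ δ hδ r (Ideal.Quotient.eq_zero_iff_mem.mp hr))
    let d := Derivation.liftOfSurjective (f := Ideal.Quotient.mkₐ k P)
      (Ideal.Quotient.mkₐ_surjective k P) (d := δ) hd0
    have hdmk : ∀ r : R, d (Ideal.Quotient.mk P r) = Ideal.Quotient.mk P (δ r) := by
      intro r
      have := Derivation.liftOfSurjective_apply (f := Ideal.Quotient.mkₐ k P)
        (Ideal.Quotient.mkₐ_surjective k P) (d := δ) hd0 r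
      simpa [Ideal.Quotient.mkₐ_eq_mk] using this
    obtain ⟨D, hD⟩ := exists_derivation_fractionRing' d
    exact ⟨d, D, hdmk, hD, hx D ⟨δ, hδ, fun r => by rw [hD, hdmk]⟩⟩
  choose dfun Dfun hdmk hDι hDx using key
  have hker : RingHom.ker (Ideal.Quotient.mk P) = P := Ideal.mk_ker
  have hMbmax : (M.map (Ideal.Quotient.mk P)).IsMaximal := by
    rcases Ideal.map_eq_top_or_isMaximal_of_surjective (Ideal.Quotient.mk P)
      Ideal.Quotient.mk_surjective hM with h | h
    · exfalso
      have hcm := Ideal.comap_map_of_surjective (Ideal.Quotient.mk P)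
        Ideal.Quotient.mk_surjective M
      rw [h, Ideal.comap_top] at hcm
      rw [← RingHom.ker_eq_comap_bot, hker, sup_eq_left.mpr hPle] at hcm
      exact hM.ne_top hcm.symm
    · exact h
  -- set of descended derivations
  set S : Set (Derivation k (R ⧸ P) (R ⧸ P)) := {d | ∃ δ, ∃ hδ : δ ∈ Δ, d = dfun δ hδ} with hS
  have core0 : ∀ I : Ideal (R ⧸ P),
      (∀ d ∈ S, ∀ y ∈ I, d y ∈ I) → I ≤ M.map (Ideal.Quotient.mk P) → I = ⊥ := by
    intro I hstab hIM
    have hJΔ : IsDeltaIdeal Δ (I.comap (Ideal.Quotient.mk P)) := by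
      intro δ hδ r hr
      show Ideal.Quotient.mk P (δ r) ∈ I
      rw [← hdmk δ hδ r]
      exact hstab (dfun δ hδ) ⟨δ, hδ, rfl⟩ _ hr
    have hJM : I.comap (Ideal.Quotient.mk P) ≤ M := by
      have hcm := Ideal.comap_map_of_surjective (Ideal.Quotient.mk P)
        Ideal.Quotient.mk_surjective M
      rw [← RingHom.ker_eq_comap_bot, hker, sup_eq_left.mpr hPle] at hcm
      intro r hr
      have h3 : r ∈ Ideal.comap (Ideal.Quotient.mk P) (M.map (Ideal.Quotient.mk P)) := hIM hr
      rwa [hcm] at h3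
    have hJP : I.comap (Ideal.Quotient.mk P) ≤ P := by
      have := le_deltaCore' Δ M hJΔ hJM
      rwa [hPM] at this
    refine (Submodule.eq_bot_iff I).mpr fun y hy => ?_
    obtain ⟨r, rfl⟩ := Ideal.Quotient.mk_surjective (I := P) y
    exact Ideal.Quotient.eq_zero_iff_mem.mpr (hJP hy)
  refine deltaRational_aux (M.map (Ideal.Quotient.mk P)) hMbmax S core0 x ?_
  rintro d ⟨δ, hδ, rfl⟩
  exact ⟨Dfun δ hδ, hDι δ hδ, hDx δ hδ⟩
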